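/- Let a_1 = 1 - 1/e, a_2 = (1 - 2/e)^{1/2}, and a_3 = ((2(1 - 2/e)^{3/2} - e^{-3})/2)^{1/3}. Then 1 > a_1 > a_2 > a_3 > 1/e, and the cutoff strategy with these cutoffs satisfies w_1(a_1) = 1/e, w_2(a_1,a_2) = 1/e, and w_3(a_1,a_2,a_3) = 1/e; that is, its winning probability equals exactly 1/e for n = 1, 2, 3 items. -/

import Mathlib

open Finset Real intervalIntegral

/-- `h(d,n) = Σ_{j=d}^{n} 1/(j-1)` -/
noncomputable def hfun (d n : ℕ) : ℝ := ∑ j ∈ Finset.Icc d n, 1 / ((j : ℝ) - 1)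

/-- `s(1,n) = 1/n` and `s(d,n) = ((d-1)/n)·h(d,n)` for `d ≥ 2`. -/
noncomputable def sfun (d n : ℕ) : ℝ :=
  if d = 1 then 1 / (n : ℝ) else ((d : ℝ) - 1) / (n : ℝ) * hfun d n

/-- `π_{n,k}(a)` for a cutoff sequence `a` (indexed from 1). -/
noncomputable def piNK (n k : ℕ) (a : ℕ → ℝ) : ℝ :=
  if k = 0 then (1 - a 1) ^ n
  else (n : ℝ) * ((n - 1).choose (k - 1) : ℝ) *
        (∫ t in (a (k + 1))..(a k), t ^ (k - 1) * (1 - t) ^ (n - k)) +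
      (n.choose k : ℝ) * (a (k + 1)) ^ k * (1 - a (k + 1)) ^ (n - k)

/-- `w_n(a) = Σ_{k=0}^{n-1} π_{n,k}(a)·s(k+1,n)`. -/
noncomputable def w (n : ℕ) (a : ℕ → ℝ) : ℝ :=
  ∑ k ∈ Finset.range n, piNK n k a * sfun (k + 1) n

/-- The cutoffs `a_1 = 1 - 1/e`, `a_2 = (1-2/e)^{1/2}`,
`a_3 = ((2(1-2/e)^{3/2} - e^{-3})/2)^{1/3}` are strictly decreasing, stay above `1/e`,
and give winning probability exactly `1/e` for `n = 1, 2, 3`. -/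
lemma intA (a b : ℝ) : (∫ t in a..b, (1 - t)) = (b - b^2/2) - (a - a^2/2) := by
  apply intervalIntegral.integral_eq_sub_of_hasDerivAt
  · intro x _
    have h : HasDerivAt (fun t : ℝ => t - t^2/2) (1 - 2*x^1/2) x :=
      (hasDerivAt_id x).sub ((hasDerivAt_pow 2 x).div_const 2)
    exact h.congr_deriv (by ring)
  · apply Continuous.intervalIntegrable; fun_prop

lemma intB (a b : ℝ) : (∫ t in a..b, (1 - t)^2) = (b - b^2 + b^3/3) - (a - a^2 + a^3/3) := by
  apply intervalIntegral.integral_eq_sub_of_hasDerivAt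
  · intro x _
    have h : HasDerivAt (fun t : ℝ => t - t^2 + t^3/3) (1 - 2*x^1 + 3*x^2/3) x :=
      ((hasDerivAt_id x).sub (hasDerivAt_pow 2 x)).add ((hasDerivAt_pow 3 x).div_const 3)
    exact h.congr_deriv (by ring)
  · apply Continuous.intervalIntegrable; fun_prop

lemma intC (a b : ℝ) : (∫ t in a..b, t * (1 - t)) = (b^2/2 - b^3/3) - (a^2/2 - a^3/3) := by
  apply intervalIntegral.integral_eq_sub_of_hasDerivAt
  · intro x _
    have h : HasDerivAt (fun t : ℝ => t^2/2 - t^3/3) (2*x^1/2 - 3*x^2/3) x :=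
      ((hasDerivAt_pow 2 x).div_const 2).sub ((hasDerivAt_pow 3 x).div_const 3)
    exact h.congr_deriv (by ring)
  · apply Continuous.intervalIntegrable; fun_prop


set_option maxHeartbeats 1000000 in
theorem stmt18 :
    (1 : ℝ) > 1 - (Real.exp 1)⁻¹ ∧
    1 - (Real.exp 1)⁻¹ > Real.sqrt (1 - 2 / Real.exp 1) ∧
    Real.sqrt (1 - 2 / Real.exp 1)
      > ((2 * (1 - 2 / Real.exp 1) ^ ((3:ℝ)/2) - Real.exp (-3)) / 2) ^ ((1:ℝ)/3) ∧
    ((2 * (1 - 2 / Real.exp 1) ^ ((3:ℝ)/2) - Real.exp (-3)) / 2) ^ ((1:ℝ)/3)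
      > (Real.exp 1)⁻¹ ∧
    (∀ cut : ℕ → ℝ,
      cut 1 = 1 - (Real.exp 1)⁻¹ →
      cut 2 = Real.sqrt (1 - 2 / Real.exp 1) →
      cut 3 = ((2 * (1 - 2 / Real.exp 1) ^ ((3:ℝ)/2) - Real.exp (-3)) / 2) ^ ((1:ℝ)/3) →
      w 1 cut = (Real.exp 1)⁻¹ ∧ w 2 cut = (Real.exp 1)⁻¹ ∧ w 3 cut = (Real.exp 1)⁻¹) := by
  set E := Real.exp 1 with hEdef
  have hE1 : (2.7182818283 : ℝ) < E := Real.exp_one_gt_d9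
  have hE2 : E < 2.7182818286 := Real.exp_one_lt_d9
  have hEpos : (0:ℝ) < E := by linarith
  have hEne : E ≠ 0 := ne_of_gt hEpos
  have hEu : E * E⁻¹ = 1 := mul_inv_cancel₀ hEne
  have hupos : (0:ℝ) < E⁻¹ := inv_pos.mpr hEpos
  have htnn : (0:ℝ) ≤ 1 - 2 / E := by
    rw [sub_nonneg, div_le_one hEpos]; linarith
  set c2 : ℝ := Real.sqrt (1 - 2 / E) with hc2def
  have h2 : c2 ^ 2 = 1 - 2 / E := Real.sq_sqrt htnn
  have hc2nn : (0:ℝ) ≤ c2 := Real.sqrt_nonneg _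
  -- c2 > 1/2
  have h2E : 2 / E < 3/4 := by rw [div_lt_iff₀ hEpos]; linarith
  have hc2half : (1:ℝ)/2 < c2 := by nlinarith [h2, h2E, hc2nn]
  -- c2^3 = (1-2/E)^(3/2)
  have h23 : c2 ^ 3 = (1 - 2 / E) ^ ((3:ℝ)/2) := by
    rw [hc2def, Real.sqrt_eq_rpow, ← Real.rpow_natCast ((1-2/E) ^ ((1:ℝ)/2)) 3,
      ← Real.rpow_mul htnn]
    norm_num
  have hexp3 : Real.exp (-3) = (E⁻¹) ^ 3 := by
    rw [show (-3:ℝ) = -1 + -1 + -1 by norm_num, Real.exp_add, Real.exp_add,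
      Real.exp_neg, hEdef]
    ring
  have hu38 : E⁻¹ < 0.38 := by
    rw [inv_lt_comm₀ hEpos (by norm_num)]; linarith
  -- X > u^3
  set X : ℝ := (2 * (1 - 2 / E) ^ ((3:ℝ)/2) - Real.exp (-3)) / 2 with hXdef
  have hXgt : (E⁻¹)^3 < X := by
    have hA := pow_lt_pow_left₀ hc2half (by norm_num) (by norm_num : (3:ℕ) ≠ 0)
    have hB := pow_lt_pow_left₀ hu38 hupos.le (by norm_num : (3:ℕ) ≠ 0)
    rw [hXdef, ← h23, hexp3]
    norm_num at hA hB ⊢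
    nlinarith [hA, hB]
  have hXnn : (0:ℝ) ≤ X := le_of_lt (lt_trans (pow_pos hupos 3) hXgt)
  set c3 : ℝ := X ^ ((1:ℝ)/3) with hc3def
  have hc3nn : (0:ℝ) ≤ c3 := Real.rpow_nonneg hXnn _
  have h3 : c3 ^ 3 = X := by
    rw [hc3def, ← Real.rpow_natCast (X ^ ((1:ℝ)/3)) 3, ← Real.rpow_mul hXnn]
    norm_num
  have hexp3pos : (0:ℝ) < Real.exp (-3) := Real.exp_pos _
  -- inequalities
  have i1 : (1:ℝ) > 1 - E⁻¹ := by linarith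
  have i2 : 1 - E⁻¹ > c2 := by
    have h1u : (0:ℝ) < 1 - E⁻¹ := by
      have : E⁻¹ < 1 := by rw [inv_lt_one_iff₀]; right; linarith
      linarith
    rw [hc2def]
    rw [show (1 - E⁻¹) = Real.sqrt ((1-E⁻¹)^2) from (Real.sqrt_sq h1u.le).symm]
    apply Real.sqrt_lt_sqrt htnn
    have h2u : 2 / E = 2 * E⁻¹ := by ring
    nlinarith [sq_nonneg E⁻¹, hupos]
  have i3 : c2 > c3 := by
    have hcc : c3 ^ 3 < c2 ^ 3 := by rw [h3, hXdef, ← h23]; linarith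
    nlinarith [hc3nn, hc2nn, sq_nonneg (c2 - c3), sq_nonneg (c2 + c3)]
  have i4 : c3 > E⁻¹ := by
    have hcc : (E⁻¹) ^ 3 < c3 ^ 3 := by rw [h3]; exact hXgt
    nlinarith [hc3nn, hupos, sq_nonneg (c3 - E⁻¹), sq_nonneg (c3 + E⁻¹)]
  refine ⟨i1, i2, i3, i4, ?_⟩
  intro cut hcut1 hcut2 hcut3
  refine ⟨?_, ?_, ?_⟩
  · rw [w, Finset.sum_range_one]
    simp only [piNK, sfun, hfun]
    norm_num [hcut1]
  · rw [show (2:ℕ) = 1+1 from rfl, w, Finset.sum_range_succ, Finset.sum_range_one]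
    simp only [piNK, sfun, hfun]
    norm_num [Finset.Icc_self, hcut1, hcut2]
    rw [intA]
    linear_combination (-1/2 : ℝ) * h2
  · rw [show (3:ℕ) = 2+1 from rfl, w, Finset.sum_range_succ, Finset.sum_range_succ,
      Finset.sum_range_one]
    simp only [piNK, sfun, hfun]
    norm_num [Finset.sum_Icc_succ_top, Finset.Icc_self, hcut1, hcut2, hcut3]
    rw [intB, intC]
    linear_combination (-1/2 : ℝ) * h2 + (-1/3 : ℝ) * h3 + (1/3 : ℝ) * h23 + (1/6 : ℝ) * hexp3
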